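/- arXiv:2509.03040 — 5 statements merged into one kernel-verified Lean document; each statement's English description precedes it below -/
import Mathlib

section
/- Let X ∈ M_{qs,ns} be a block matrix with s×s blocks, R = Y ⊗ I ∈ M_{ns} with Y ∈ M_n and I the s×s identity, and Z ∈ M_{ns,rs} a block matrix with s×s blocks. Then (X·R) ⋆ Z = X ⋆ (R·Z), where ⋆ is the blockwise Kronecker multiplication defined by (X ⋆ Z)_{iν} = Σ_j X_{ij} ⊗ Z_{jν}. -/
open Matrix Kronecker

/-- The block of a block matrix with `s×s` blocks. -/
def blk {K : Type*} [Field K] {q r s : ℕ}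
    (M : Matrix (Fin q × Fin s) (Fin r × Fin s) K) (i : Fin q) (j : Fin r) :
    Matrix (Fin s) (Fin s) K := fun a b => M (i, a) (j, b)

/-- The block multiplication `X ⋆ Z`, with `(X ⋆ Z)_{iν} = Σ_j X_{ij} ⊗ Z_{jν}`. -/
def bstar {K : Type*} [Field K] {q n r s : ℕ}
    (X : Matrix (Fin q × Fin s) (Fin n × Fin s) K)
    (Z : Matrix (Fin n × Fin s) (Fin r × Fin s) K) :
    Matrix (Fin q × (Fin s × Fin s)) (Fin r × (Fin s × Fin s)) K :=
  fun p c => (∑ j, blk X p.1 j ⊗ₖ blk Z j c.1) p.2 c.2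

/-- If `R = Y ⊗ I` has scalar blocks, then `(X·R) ⋆ Z = X ⋆ (R·Z)`. -/
theorem stmt5 {K : Type*} [Field K] {q n r s : ℕ}
    (X : Matrix (Fin q × Fin s) (Fin n × Fin s) K) (Y : Matrix (Fin n) (Fin n) K)
    (Z : Matrix (Fin n × Fin s) (Fin r × Fin s) K) :
    bstar (X * (Y ⊗ₖ (1 : Matrix (Fin s) (Fin s) K))) Z =
      bstar X ((Y ⊗ₖ (1 : Matrix (Fin s) (Fin s) K)) * Z) := by
  funext p c
  simp only [bstar, blk, Finset.sum_apply, Matrix.sum_apply, kroneckerMap_apply, mul_apply,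
    Fintype.sum_prod_type, Matrix.one_apply, mul_ite, mul_zero, mul_one,
    ite_mul, zero_mul, Finset.sum_ite_eq, Finset.mem_univ, if_true,
    Finset.sum_ite_eq', Finset.sum_mul, Finset.mul_sum]
  rw [Finset.sum_comm]
  congr 1; ext j; congr 1; ext k; ring
end

section
/- Every unreduced lower block Hessenberg matrix Z ∈ M_{ns}(𝕂) (i.e., Z_{ij} = 0 for j > i+1 and each superdiagonal block Z_{i,i+1} is invertible) is similar, via an invertible lower block triangular matrix S, to a lower block Frobenius (block companion) matrix: S Z S⁻¹ has identity blocks on the block superdiagonal, zero blocks elsewhere in the first n−1 block rows, and arbitrary blocks in the last block row. -/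
open Matrix

namespace Stmt10Aux

variable {K : Type*} [Field K] {n s : ℕ}

/-- Block rows of the similarity matrix, defined recursively. -/
def B (Z : Matrix (Fin n × Fin s) (Fin n × Fin s) K) : ℕ → Fin n → Matrix (Fin s) (Fin s) K
  | 0, j => if (j : ℕ) = 0 then 1 else 0
  | (i+1), j => ∑ k, B Z i k * blk Z k j

theorem B_eq_zero (Z : Matrix (Fin n × Fin s) (Fin n × Fin s) K)
    (hhess : ∀ i j : Fin n, (i : ℕ) + 1 < (j : ℕ) → blk Z i j = 0) :
    ∀ (i : ℕ) (j : Fin n), i < (j : ℕ) → B Z i j = 0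
  | 0, j, h => by
    have : (j : ℕ) ≠ 0 := by omega
    simp [B, this]
  | (i+1), j, h => by
    rw [B]
    apply Finset.sum_eq_zero
    intro k _
    rcases lt_or_ge i (k : ℕ) with hk | hk
    · rw [B_eq_zero Z hhess i k hk, Matrix.zero_mul]
    · rw [hhess k j (by omega), Matrix.mul_zero]

theorem B_succ_diag (Z : Matrix (Fin n × Fin s) (Fin n × Fin s) K)
    (hhess : ∀ i j : Fin n, (i : ℕ) + 1 < (j : ℕ) → blk Z i j = 0)
    (i : ℕ) (h : i + 1 < n) :
    B Z (i+1) ⟨i+1, h⟩ = B Z i ⟨i, Nat.lt_of_succ_lt h⟩ * blk Z ⟨i, Nat.lt_of_succ_lt h⟩ ⟨i+1, h⟩ := by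
  rw [B]
  apply Finset.sum_eq_single (⟨i, by omega⟩ : Fin n)
  · intro k _ hk
    rcases lt_or_ge i (k : ℕ) with hk' | hk'
    · rw [B_eq_zero Z hhess i k hk', Matrix.zero_mul]
    · have : (k : ℕ) ≠ i := fun hc => hk (Fin.ext hc)
      rw [hhess k ⟨i+1, h⟩ (by simp; omega), Matrix.mul_zero]
  · intro hmem
    exact absurd (Finset.mem_univ _) hmem

theorem B_diag_unit (Z : Matrix (Fin n × Fin s) (Fin n × Fin s) K)
    (hhess : ∀ i j : Fin n, (i : ℕ) + 1 < (j : ℕ) → blk Z i j = 0)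
    (hsup : ∀ (i : ℕ) (h : i + 1 < n), IsUnit (blk Z ⟨i, Nat.lt_of_succ_lt h⟩ ⟨i + 1, h⟩).det) :
    ∀ (i : ℕ) (h : i < n), IsUnit (B Z i ⟨i, h⟩).det
  | 0, h => by simp [B]
  | (i+1), h => by
    rw [B_succ_diag Z hhess i h, Matrix.det_mul]
    exact (B_diag_unit Z hhess hsup i (by omega)).mul (hsup i h)

/-- The similarity matrix. -/
def Smat (Z : Matrix (Fin n × Fin s) (Fin n × Fin s) K) :
    Matrix (Fin n × Fin s) (Fin n × Fin s) K :=
  Matrix.of fun p q => B Z (p.1 : ℕ) q.1 p.2 q.2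

theorem blk_Smat (Z : Matrix (Fin n × Fin s) (Fin n × Fin s) K) (i j : Fin n) :
    blk (Smat Z) i j = B Z (i : ℕ) j := rfl

theorem Smat_det_isUnit (Z : Matrix (Fin n × Fin s) (Fin n × Fin s) K)
    (hhess : ∀ i j : Fin n, (i : ℕ) + 1 < (j : ℕ) → blk Z i j = 0)
    (hsup : ∀ (i : ℕ) (h : i + 1 < n), IsUnit (blk Z ⟨i, Nat.lt_of_succ_lt h⟩ ⟨i + 1, h⟩).det) :
    IsUnit (Smat Z).det := by
  rw [← Matrix.det_transpose]
  have ht : (Smat Z)ᵀ.BlockTriangular Prod.fst := by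
    intro p q hq
    have : (Smat Z)ᵀ p q = B Z (q.1 : ℕ) p.1 q.2 p.2 := rfl
    rw [this, B_eq_zero Z hhess (q.1 : ℕ) p.1 hq]
    rfl
  rw [ht.det_fintype]
  apply Finset.prod_induction _ IsUnit (fun _ _ => IsUnit.mul) isUnit_one
  intro k _
  let e : Fin s ≃ {p : Fin n × Fin s // p.1 = k} :=
    { toFun := fun a => ⟨(k, a), rfl⟩
      invFun := fun p => p.1.2
      left_inv := fun a => rfl
      right_inv := fun p => by
        obtain ⟨⟨pk, pa⟩, hp⟩ := p
        subst hp
        rfl }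
  have hsq : (Smat Z)ᵀ.toSquareBlock Prod.fst k = ((B Z (k : ℕ) k)ᵀ).submatrix e.symm e.symm := by
    ext ⟨p, hp⟩ ⟨q, hq⟩
    show B Z (q.1 : ℕ) p.1 q.2 p.2 = B Z (k : ℕ) k q.2 p.2
    rw [hp, hq]
  rw [hsq, Matrix.det_submatrix_equiv_self, Matrix.det_transpose]
  have := B_diag_unit Z hhess hsup (k : ℕ) k.isLt
  simpa using this

theorem Smat_row_shift (Z : Matrix (Fin n × Fin s) (Fin n × Fin s) K)
    (i : Fin n) (h : (i : ℕ) + 1 < n) (a : Fin s) (q : Fin n × Fin s) :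
    (Smat Z * Z) (i, a) q = Smat Z (⟨(i : ℕ) + 1, h⟩, a) q := by
  obtain ⟨j, b⟩ := q
  have hr : Smat Z (⟨(i : ℕ) + 1, h⟩, a) (j, b) = B Z ((i : ℕ) + 1) j a b := rfl
  rw [hr, B, Matrix.mul_apply, Fintype.sum_prod_type, Matrix.sum_apply]
  refine Finset.sum_congr rfl fun k _ => ?_
  rw [Matrix.mul_apply]
  rfl

end Stmt10Aux

open Stmt10Aux in
/-- Every unreduced lower block Hessenberg matrix is similar, via an invertible lower
block triangular matrix `S`, to a lower block Frobenius (block companion) matrix. -/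
theorem stmt10 {K : Type*} [Field K] {n s : ℕ}
    (Z : Matrix (Fin n × Fin s) (Fin n × Fin s) K)
    (hhess : ∀ i j : Fin n, (i : ℕ) + 1 < (j : ℕ) → blk Z i j = 0)
    (hsup : ∀ (i : ℕ) (h : i + 1 < n), IsUnit (blk Z ⟨i, by omega⟩ ⟨i + 1, h⟩).det) :
    ∃ S : Matrix (Fin n × Fin s) (Fin n × Fin s) K,
      IsUnit S.det ∧
      (∀ i j : Fin n, (i : ℕ) < (j : ℕ) → blk S i j = 0) ∧
      (∀ i j : Fin n, (i : ℕ) + 1 < n →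
        blk (S * Z * S⁻¹) i j =
          if (j : ℕ) = (i : ℕ) + 1 then (1 : Matrix (Fin s) (Fin s) K) else 0) := by
  refine ⟨Smat Z, Smat_det_isUnit Z hhess hsup, ?_, ?_⟩
  · intro i j hij
    rw [blk_Smat, B_eq_zero Z hhess _ _ hij]
  · intro i j h
    have hdet := Smat_det_isUnit Z hhess hsup
    have hinv : Smat Z * (Smat Z)⁻¹ = 1 := Matrix.mul_nonsing_inv _ hdet
    ext a b
    have h1 : blk (Smat Z * Z * (Smat Z)⁻¹) i j a b
        = ∑ p, (Smat Z * Z) (i, a) p * (Smat Z)⁻¹ p (j, b) := by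
      show (Smat Z * Z * (Smat Z)⁻¹) (i, a) (j, b) = _
      rw [Matrix.mul_apply]
    rw [h1]
    have h2 : ∑ p, (Smat Z * Z) (i, a) p * (Smat Z)⁻¹ p (j, b)
        = ∑ p, Smat Z (⟨(i : ℕ) + 1, h⟩, a) p * (Smat Z)⁻¹ p (j, b) := by
      refine Finset.sum_congr rfl fun p _ => ?_
      rw [Smat_row_shift Z i h a p]
    rw [h2, ← Matrix.mul_apply, hinv, Matrix.one_apply]
    by_cases hj : (j : ℕ) = (i : ℕ) + 1
    · have : (⟨(i : ℕ) + 1, h⟩ : Fin n) = j := Fin.ext hj.symm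
      simp [hj, this, Prod.ext_iff, Matrix.one_apply]
    · have : ((⟨(i : ℕ) + 1, h⟩ : Fin n), a) ≠ (j, b) := by
        intro hc
        apply hj
        have hc' := congrArg (fun p : Fin n × Fin s => (p.1 : ℕ)) hc
        simpa using hc'.symm
      simp [hj, this]
end

section
/- Let F ∈ M_{ns} be the lower block Frobenius matrix with last block row [−A_n,…,−A_1], let P ∈ M_{ns} be the lower block triangular Toeplitz matrix with blocks A_{i−j} below the diagonal (A_0 = I), and let D ∈ M_{ns} be any block matrix whose first p−1 block rows and last n−p block columns are zero. Then there exists an invertible lower block triangular matrix S such that S(F + D)S⁻¹ = Φ is the lower block Frobenius matrix with coefficients Γ_i = A_i − SP_s(𝒥^{i−1} P D) for i = 1,…,n, where 𝒥 = J ⊗ I and J is the n×n shift matrix. -/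
open Matrix Kronecker

/-- The block trace `SP_s`. -/
def SP {K : Type*} [Field K] {n s : ℕ}
    (M : Matrix (Fin n × Fin s) (Fin n × Fin s) K) : Matrix (Fin s) (Fin s) K :=
  ∑ i, blk M i i

/-- The `n×n` shift matrix `J` (ones on the superdiagonal). -/
def shiftJ (K : Type*) [Field K] (n : ℕ) : Matrix (Fin n) (Fin n) K :=
  fun i j => if (j : ℕ) = (i : ℕ) + 1 then 1 else 0

/-- The lower block Frobenius (block companion) matrix of the matrix polynomial
`λⁿ I + A 1 λ^{n-1} + … + A n`: identity blocks on the block superdiagonal, zeros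
elsewhere in the first `n-1` block rows, last block row `[-A n, …, -A 1]`. -/
def frob {K : Type*} [Field K] (n s : ℕ) (A : ℕ → Matrix (Fin s) (Fin s) K) :
    Matrix (Fin n × Fin s) (Fin n × Fin s) K :=
  fun p c =>
    if (p.1 : ℕ) + 1 < n then
      (if (c.1 : ℕ) = (p.1 : ℕ) + 1 then (1 : Matrix (Fin s) (Fin s) K) else 0) p.2 c.2
    else (-(A (n - (c.1 : ℕ)))) p.2 c.2

/-- The lower block triangular block Toeplitz matrix `P` with blocks `A (i - j)`
on and below the block diagonal (`A 0 = I`). -/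
def toep {K : Type*} [Field K] (n s : ℕ) (A : ℕ → Matrix (Fin s) (Fin s) K) :
    Matrix (Fin n × Fin s) (Fin n × Fin s) K :=
  fun p c => if (c.1 : ℕ) ≤ (p.1 : ℕ) then (A ((p.1 : ℕ) - (c.1 : ℕ))) p.2 c.2 else 0

/-- `N 0 = I`, `N (ν+1) = N ν · F + Iₙ ⊗ A (ν+1)`. -/
def Nmat {K : Type*} [Field K] {n s : ℕ}
    (F : Matrix (Fin n × Fin s) (Fin n × Fin s) K)
    (A : ℕ → Matrix (Fin s) (Fin s) K) : ℕ → Matrix (Fin n × Fin s) (Fin n × Fin s) K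
  | 0 => 1
  | ν + 1 => Nmat F A ν * F + (1 : Matrix (Fin n) (Fin n) K) ⊗ₖ A (ν + 1)

namespace S11

variable {K : Type*} [Field K] {s n p : ℕ}

/-- row 0 of `M ^ k`. -/
def urow [NeZero n] (M : Matrix (Fin n × Fin s) (Fin n × Fin s) K) (k : ℕ) :
    Matrix (Fin s) (Fin n × Fin s) K := fun a q => (M ^ k) ((0 : Fin n), a) q

def Tm (X : Matrix (Fin n × Fin s) (Fin n × Fin s) K) (m : ℕ) : Matrix (Fin s) (Fin s) K :=
  ∑ t : Fin n, ∑ r : Fin n, if (r : ℕ) = (t : ℕ) + m then blk X r t else 0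

def Rm (X : Matrix (Fin n × Fin s) (Fin n × Fin s) K) (p ν j : ℕ) : Matrix (Fin s) (Fin s) K :=
  ∑ c : Fin n, ∑ r : Fin n,
    if (r : ℕ) + 1 + j = (c : ℕ) + ν ∧ j < (c : ℕ) ∧ (c : ℕ) < p then blk X r c else 0

def Gam (A : ℕ → Matrix (Fin s) (Fin s) K)
    (X : Matrix (Fin n × Fin s) (Fin n × Fin s) K) : ℕ → Matrix (Fin s) (Fin s) K
  | 0 => 1
  | k + 1 => A (k + 1) - Tm X k

def wrow [NeZero n] (M : Matrix (Fin n × Fin s) (Fin n × Fin s) K)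
    (G : ℕ → Matrix (Fin s) (Fin s) K) (ν : ℕ) : Matrix (Fin s) (Fin n × Fin s) K :=
  ∑ k ∈ Finset.range (ν + 1), G k * urow M (ν - k)

lemma urow_zero [NeZero n] (M : Matrix (Fin n × Fin s) (Fin n × Fin s) K) (a : Fin s)
    (q : Fin n × Fin s) : urow M 0 a q = (1 : Matrix (Fin n × Fin s) (Fin n × Fin s) K)
      ((0 : Fin n), a) q := by
  simp [urow]

lemma urow_succ [NeZero n] (M : Matrix (Fin n × Fin s) (Fin n × Fin s) K) (k : ℕ) :
    urow M (k + 1) = urow M k * M := by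
  funext a q
  simp [urow, pow_succ, Matrix.mul_apply]

lemma wrow_succ [NeZero n] (M : Matrix (Fin n × Fin s) (Fin n × Fin s) K)
    (G : ℕ → Matrix (Fin s) (Fin s) K) (ν : ℕ) :
    wrow M G (ν + 1) = wrow M G ν * M + G (ν + 1) * urow M 0 := by
  rw [wrow, Finset.sum_range_succ, Nat.sub_self, wrow, Matrix.sum_mul]
  congr 1
  refine Finset.sum_congr rfl fun k hk => ?_
  have hk' : k ≤ ν := Nat.lt_succ_iff.mp (Finset.mem_range.mp hk)
  have : ν + 1 - k = (ν - k) + 1 := by omega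
  rw [this, urow_succ, Matrix.mul_assoc]

lemma mulblk (V : Matrix (Fin s) (Fin n × Fin s) K)
    (X : Matrix (Fin n × Fin s) (Fin n × Fin s) K) (a : Fin s) (j : Fin n) (b : Fin s) :
    (V * X) a (j, b) = ∑ m : Fin n, ∑ c : Fin s, V a (m, c) * X (m, c) (j, b) := by
  rw [Matrix.mul_apply, Fintype.sum_prod_type]

lemma blk_mul {X Y : Matrix (Fin n × Fin s) (Fin n × Fin s) K} (i j : Fin n) :
    blk (X * Y) i j = ∑ m : Fin n, blk X i m * blk Y m j := by
  funext a b
  rw [blk, Matrix.mul_apply, Fintype.sum_prod_type]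
  rw [Matrix.sum_apply]
  exact Finset.sum_congr rfl fun m _ => by rw [Matrix.mul_apply]; rfl

lemma blk_toep (A : ℕ → Matrix (Fin s) (Fin s) K) (r m : Fin n) :
    blk (toep n s A) r m = if (m : ℕ) ≤ (r : ℕ) then A ((r : ℕ) - (m : ℕ)) else 0 := by
  funext a b
  simp only [blk, toep]
  split_ifs <;> rfl

section PD
variable (A : ℕ → Matrix (Fin s) (Fin s) K) (D : Matrix (Fin n × Fin s) (Fin n × Fin s) K)

lemma blk_PD (r c : Fin n) :
    blk (toep n s A * D) r c
      = ∑ m : Fin n, (if (m : ℕ) ≤ (r : ℕ) then A ((r : ℕ) - (m : ℕ)) else 0) * blk D m c := by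
  rw [blk_mul]
  exact Finset.sum_congr rfl fun m _ => by rw [blk_toep]

variable {A D}
variable (hDrows : ∀ i j : Fin n, (i : ℕ) + 1 < p → blk D i j = 0)
    (hDcols : ∀ i j : Fin n, p ≤ (j : ℕ) → blk D i j = 0)

include hDcols in
lemma blk_PD_zero_right {r c : Fin n} (h : p ≤ (c : ℕ)) : blk (toep n s A * D) r c = 0 := by
  rw [blk_PD]
  refine Finset.sum_eq_zero fun m _ => ?_
  rw [hDcols m c h, Matrix.mul_zero]

include hDrows hDcols in
lemma blk_PD_zero_above {r c : Fin n} (h : (r : ℕ) < (c : ℕ)) : blk (toep n s A * D) r c = 0 := by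
  rw [blk_PD]
  refine Finset.sum_eq_zero fun m _ => ?_
  rcases le_or_gt p (c : ℕ) with hc | hc
  · rw [hDcols m c hc, Matrix.mul_zero]
  rcases lt_or_ge ((m : ℕ) + 1) p with hm | hm
  · rw [hDrows m c hm, Matrix.mul_zero]
  · have : ¬ ((m : ℕ) ≤ (r : ℕ)) := by omega
    rw [if_neg this, Matrix.zero_mul]

-- (I2)
lemma Rm_zero_of_ple (X : Matrix (Fin n × Fin s) (Fin n × Fin s) K) (ν j : ℕ)
    (h : p ≤ j + 1) : Rm X p ν j = 0 := by
  refine Finset.sum_eq_zero fun c _ => Finset.sum_eq_zero fun r _ => ?_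
  rw [if_neg]; omega

-- (I4)
lemma Rm_zero_of_n (X : Matrix (Fin n × Fin s) (Fin n × Fin s) K) (j : ℕ) :
    Rm X p n j = 0 := by
  refine Finset.sum_eq_zero fun c _ => Finset.sum_eq_zero fun r _ => ?_
  rw [if_neg]
  rintro ⟨h1, h2, h3⟩
  have := r.isLt
  omega

-- (I3')
include hDrows hDcols in
lemma Rm_zero_of_le {ν j : ℕ} (h : ν ≤ j) : Rm (toep n s A * D) p ν j = 0 := by
  refine Finset.sum_eq_zero fun c _ => Finset.sum_eq_zero fun r _ => ?_
  split_ifs with hcond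
  · exact blk_PD_zero_above hDrows hDcols (by omega)
  · rfl

-- (I5)
include hDrows hDcols in
lemma Rm_step {ν j : ℕ} (hν : ν < n) (hj : j + 1 < n) (hjp : j + 1 < p) :
    Rm (toep n s A * D) p ν j
      = blk (toep n s A * D) ⟨ν, hν⟩ ⟨j + 1, hj⟩ + Rm (toep n s A * D) p (ν + 1) (j + 1) := by
  set X := toep n s A * D with hX
  have key : ∀ c r : Fin n,
      (if (r : ℕ) + 1 + j = (c : ℕ) + ν ∧ j < (c : ℕ) ∧ (c : ℕ) < p
        then blk X r c else 0)
      = (if c = ⟨j + 1, hj⟩ ∧ r = ⟨ν, hν⟩ then blk X r c else 0)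
        + (if (r : ℕ) + 1 + (j + 1) = (c : ℕ) + (ν + 1) ∧ j + 1 < (c : ℕ) ∧ (c : ℕ) < p
            then blk X r c else 0) := by
    intro c r
    simp only [Fin.ext_iff]
    split_ifs <;> first | (exfalso; omega) | simp
  calc Rm X p ν j
      = ∑ c : Fin n, ∑ r : Fin n,
          ((if c = ⟨j + 1, hj⟩ ∧ r = ⟨ν, hν⟩ then blk X r c else 0)
            + (if (r : ℕ) + 1 + (j + 1) = (c : ℕ) + (ν + 1) ∧ j + 1 < (c : ℕ) ∧ (c : ℕ) < p
                then blk X r c else 0)) :=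
        Finset.sum_congr rfl fun c _ => Finset.sum_congr rfl fun r _ => key c r
    _ = blk X ⟨ν, hν⟩ ⟨j + 1, hj⟩ + Rm X p (ν + 1) (j + 1) := by
        unfold Rm
        have : ∀ c : Fin n, ∑ r : Fin n,
            ((if c = ⟨j + 1, hj⟩ ∧ r = ⟨ν, hν⟩ then blk X r c else 0)
              + (if (r : ℕ) + 1 + (j + 1) = (c : ℕ) + (ν + 1) ∧ j + 1 < (c : ℕ) ∧ (c : ℕ) < p
                  then blk X r c else 0))
            = (if c = ⟨j + 1, hj⟩ then blk X ⟨ν, hν⟩ c else 0)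
              + ∑ r : Fin n, (if (r : ℕ) + 1 + (j + 1) = (c : ℕ) + (ν + 1) ∧ j + 1 < (c : ℕ)
                  ∧ (c : ℕ) < p then blk X r c else 0) := by
          intro c
          rw [Finset.sum_add_distrib]
          congr 1
          simp [ite_and, Finset.sum_ite_eq']
        rw [Finset.sum_congr rfl fun c _ => this c, Finset.sum_add_distrib]
        congr 1
        simp [Finset.sum_ite_eq']

-- (I6)
include hDrows hDcols in
lemma Tm_step {ν : ℕ} (hν : ν < n) (h0 : 0 < n) :
    Tm (toep n s A * D) ν
      = blk (toep n s A * D) ⟨ν, hν⟩ ⟨0, h0⟩ + Rm (toep n s A * D) p (ν + 1) 0 := by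
  set X := toep n s A * D with hX
  have key : ∀ t r : Fin n,
      (if (r : ℕ) = (t : ℕ) + ν then blk X r t else 0)
      = (if t = ⟨0, h0⟩ ∧ r = ⟨ν, hν⟩ then blk X r t else 0)
        + (if (r : ℕ) + 1 + 0 = (t : ℕ) + (ν + 1) ∧ 0 < (t : ℕ) ∧ (t : ℕ) < p
            then blk X r t else 0) := by
    intro t r
    rcases le_or_gt p (t : ℕ) with htp | htp
    · have hz : blk X r t = 0 := blk_PD_zero_right hDcols htp
      simp [hz]
    simp only [Fin.ext_iff]
    split_ifs <;> first | (exfalso; omega) | simp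
  calc Tm X ν
      = ∑ t : Fin n, ∑ r : Fin n,
          ((if t = ⟨0, h0⟩ ∧ r = ⟨ν, hν⟩ then blk X r t else 0)
            + (if (r : ℕ) + 1 + 0 = (t : ℕ) + (ν + 1) ∧ 0 < (t : ℕ) ∧ (t : ℕ) < p
                then blk X r t else 0)) :=
        Finset.sum_congr rfl fun t _ => Finset.sum_congr rfl fun r _ => key t r
    _ = blk X ⟨ν, hν⟩ ⟨0, h0⟩ + Rm X p (ν + 1) 0 := by
        unfold Rm
        have : ∀ t : Fin n, ∑ r : Fin n,
            ((if t = ⟨0, h0⟩ ∧ r = ⟨ν, hν⟩ then blk X r t else 0)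
              + (if (r : ℕ) + 1 + 0 = (t : ℕ) + (ν + 1) ∧ 0 < (t : ℕ)
                  ∧ (t : ℕ) < p then blk X r t else 0))
            = (if t = ⟨0, h0⟩ then blk X ⟨ν, hν⟩ t else 0)
              + ∑ r : Fin n, (if (r : ℕ) + 1 + 0 = (t : ℕ) + (ν + 1) ∧ 0 < (t : ℕ)
                  ∧ (t : ℕ) < p then blk X r t else 0) := by
          intro t
          rw [Finset.sum_add_distrib]
          congr 1
          simp [ite_and, Finset.sum_ite_eq']
        rw [Finset.sum_congr rfl fun t _ => this t, Finset.sum_add_distrib]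
        congr 1
        simp [Finset.sum_ite_eq']

-- (I7)
lemma Tm_last (X : Matrix (Fin n × Fin s) (Fin n × Fin s) K) (h0 : 0 < n) (h1 : n - 1 < n) :
    Tm X (n - 1) = blk X ⟨n - 1, h1⟩ ⟨0, h0⟩ := by
  have key : ∀ t r : Fin n,
      (if (r : ℕ) = (t : ℕ) + (n - 1) then blk X r t else 0)
      = (if t = ⟨0, h0⟩ ∧ r = ⟨n - 1, h1⟩ then blk X r t else 0) := by
    intro t r
    simp only [Fin.ext_iff]
    split_ifs <;> first | (exfalso; omega) | simp
  rw [Tm, Finset.sum_congr rfl fun t _ => Finset.sum_congr rfl fun r _ => key t r]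
  simp [ite_and, Finset.sum_ite_eq', Finset.sum_ite_eq]

-- multiplication of a block row vector by `frob`
lemma Fpart (A : ℕ → Matrix (Fin s) (Fin s) K) (W : Fin n → Matrix (Fin s) (Fin s) K)
    (hn1 : n - 1 < n) (a b : Fin s) (j : Fin n) :
    ∑ m : Fin n, ∑ c : Fin s, W m a c * frob n s A (m, c) (j, b)
      = (∑ m : Fin n, if (m : ℕ) + 1 < n ∧ (j : ℕ) = (m : ℕ) + 1 then W m a b else 0)
        + (W ⟨n - 1, hn1⟩ * (-(A (n - (j : ℕ))))) a b := by
  have key : ∀ m : Fin n,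
      ∑ c : Fin s, W m a c * frob n s A (m, c) (j, b)
      = (if (m : ℕ) + 1 < n ∧ (j : ℕ) = (m : ℕ) + 1 then W m a b else 0)
        + (if m = ⟨n - 1, hn1⟩ then (W ⟨n - 1, hn1⟩ * (-(A (n - (j : ℕ))))) a b else 0) := by
    intro m
    by_cases hm : (m : ℕ) + 1 < n
    · have hmne : ¬ (m = ⟨n - 1, hn1⟩) := by
        intro h
        have : (m : ℕ) = n - 1 := congrArg Fin.val h
        omega
      rw [if_neg hmne, add_zero]
      by_cases hj : (j : ℕ) = (m : ℕ) + 1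
      · rw [if_pos ⟨hm, hj⟩]
        have : ∀ c : Fin s, frob n s A (m, c) (j, b)
            = if c = b then (1 : K) else 0 := by
          intro c
          simp only [frob, if_pos hm, if_pos hj, Matrix.one_apply]
        simp [this, mul_ite, mul_one, mul_zero, Finset.sum_ite_eq']
      · rw [if_neg (by tauto)]
        refine Finset.sum_eq_zero fun c _ => ?_
        simp only [frob, if_pos hm, if_neg hj]
        simp
    · have hm' : m = ⟨n - 1, hn1⟩ := Fin.ext (by have := m.isLt; simp; omega)
      subst hm'
      rw [if_pos rfl, if_neg (fun h => hm h.1), zero_add, Matrix.mul_apply]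
      refine Finset.sum_congr rfl fun c _ => ?_
      simp only [frob, if_neg hm]
  rw [Finset.sum_congr rfl fun m _ => key m, Finset.sum_add_distrib]
  congr 1
  simp [Finset.sum_ite_eq']

include hDrows hDcols in
lemma Dpart {ν : ℕ} (hν : ν < n) (a b : Fin s) (j : Fin n)
    (W : Fin n → Matrix (Fin s) (Fin s) K)
    (hW : ∀ m : Fin n, W m = (if (m : ℕ) ≤ ν then A (ν - (m : ℕ)) else 0)
      - Rm (toep n s A * D) p ν (m : ℕ)) :
    ∑ m : Fin n, ∑ c : Fin s, W m a c * D (m, c) (j, b)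
      = blk (toep n s A * D) ⟨ν, hν⟩ j a b := by
  have key : ∀ m : Fin n,
      ∑ c : Fin s, W m a c * D (m, c) (j, b)
      = ((if (m : ℕ) ≤ ν then A (ν - (m : ℕ)) else 0) * blk D m j) a b := by
    intro m
    rcases lt_or_ge ((m : ℕ) + 1) p with hm | hm
    · have hD0 : blk D m j = 0 := hDrows m j hm
      have : ∀ c : Fin s, D (m, c) (j, b) = 0 := fun c => congrFun (congrFun hD0 c) b
      simp [this, hD0]
    · have hR : Rm (toep n s A * D) p ν (m : ℕ) = 0 :=
        Rm_zero_of_ple _ _ _ hm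
      rw [Matrix.mul_apply]
      refine Finset.sum_congr rfl fun c _ => ?_
      rw [hW m, hR, sub_zero]
      rfl
  rw [Finset.sum_congr rfl fun m _ => key m]
  have : blk (toep n s A * D) ⟨ν, hν⟩ j a b
      = (∑ m : Fin n, (if (m : ℕ) ≤ ν then A (ν - (m : ℕ)) else 0) * blk D m j) a b := by
    rw [blk_PD]
  rw [this]
  simp [Matrix.sum_apply]

include hDrows hDcols in
lemma ML [NeZero n] (hpn : p ≤ n) (hA0 : A 0 = 1) :
    ∀ ν, ν < n → ∀ (j : Fin n) (a b : Fin s),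
      wrow (frob n s A + D) (Gam A (toep n s A * D)) ν a (j, b)
        = ((if (j : ℕ) ≤ ν then A (ν - (j : ℕ)) else 0)
            - Rm (toep n s A * D) p ν (j : ℕ)) a b := by
  intro ν
  induction ν with
  | zero =>
    intro _ j a b
    have h1 : wrow (frob n s A + D) (Gam A (toep n s A * D)) 0
        = urow (frob n s A + D) 0 := by
      rw [wrow]
      simp [Gam]
    rw [h1, urow_zero, Rm_zero_of_le hDrows hDcols (Nat.zero_le _)]
    by_cases hj : j = (0 : Fin n)
    · subst hj
      simp [Matrix.one_apply, Prod.ext_iff, hA0, Matrix.sub_apply, Matrix.one_apply]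
    · have hj' : ¬ ((j : ℕ) ≤ 0) := by
        intro h
        refine hj (Fin.ext ?_)
        rw [Fin.val_zero]
        omega
      have hne : ((0 : Fin n), a) ≠ (j, b) := by
        intro h
        exact hj ((Prod.ext_iff.mp h).1.symm)
      simp [Matrix.one_apply_ne hne, hj']
  | succ ν ih =>
    intro hν1 j a b
    have hν : ν < n := by omega
    have hn1 : n - 1 < n := by omega
    have h0n : 0 < n := by omega
    set X := toep n s A * D with hX
    set Mm := frob n s A + D with hM
    set G := Gam A X with hG
    set W : Fin n → Matrix (Fin s) (Fin s) K :=
      fun m => (if (m : ℕ) ≤ ν then A (ν - (m : ℕ)) else 0) - Rm X p ν (m : ℕ) with hW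
    rw [wrow_succ, Matrix.add_apply, mulblk]
    have expand : ∀ (m : Fin n) (c : Fin s), wrow Mm G ν a (m, c) * Mm (m, c) (j, b)
        = W m a c * frob n s A (m, c) (j, b) + W m a c * D (m, c) (j, b) := by
      intro m c
      rw [ih hν m a c, hM, Matrix.add_apply, mul_add]
    rw [Finset.sum_congr rfl fun m _ => Finset.sum_congr rfl fun c _ => expand m c,
      Finset.sum_congr rfl fun (m : Fin n) _ => Finset.sum_add_distrib,
      Finset.sum_add_distrib,
      Fpart A W hn1 a b j, Dpart hDrows hDcols hν a b j W (fun m => rfl)]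
    have hWn1 : W ⟨n - 1, hn1⟩ = 0 := by
      rw [hW]
      simp only
      rw [if_neg (by omega), Rm_zero_of_ple _ _ _ (by omega), sub_zero]
    rw [hWn1]
    simp only [Matrix.zero_mul, Matrix.mul_neg, neg_zero, Matrix.zero_apply, add_zero]
    have hsecond : (G (ν + 1) * urow Mm 0) a (j, b)
        = if j = (0 : Fin n) then G (ν + 1) a b else 0 := by
      rw [Matrix.mul_apply]
      by_cases hj : j = (0 : Fin n)
      · subst hj
        rw [if_pos rfl]
        have : ∀ c : Fin s, urow Mm 0 c ((0 : Fin n), b) = if c = b then (1 : K) else 0 := by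
          intro c
          rw [urow_zero, Matrix.one_apply]
          simp [Prod.ext_iff, eq_comm]
        simp [this, mul_ite, mul_one, mul_zero, Finset.sum_ite_eq']
      · rw [if_neg hj]
        refine Finset.sum_eq_zero fun c _ => ?_
        rw [urow_zero, Matrix.one_apply, if_neg (by simp [Prod.ext_iff, Ne.symm, eq_comm]; tauto),
          mul_zero]
    rw [hsecond]
    obtain ⟨jv, hjlt⟩ := j
    rcases jv with _ | j'
    · -- j = 0
      have hsum0 : (∑ m : Fin n, if (m : ℕ) + 1 < n ∧ ((⟨0, hjlt⟩ : Fin n) : ℕ) = (m : ℕ) + 1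
          then W m a b else 0) = 0 := by
        refine Finset.sum_eq_zero fun m _ => if_neg ?_
        simp
      have hj0 : (⟨0, hjlt⟩ : Fin n) = 0 := rfl
      rw [hsum0, hj0, if_pos rfl]
      have hGam : G (ν + 1) = A (ν + 1) - Tm X ν := rfl
      rw [hGam, Tm_step hDrows hDcols hν h0n]
      simp [Matrix.sub_apply, Matrix.add_apply]
      have hbb : blk (toep n s A * D) ⟨ν, hν⟩ 0 a b
          = blk (toep n s A * D) ⟨ν, hν⟩ ⟨0, h0n⟩ a b := rfl
      rw [hbb]
      ring
    · -- j = j' + 1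
      have hj' : j' < n := by omega
      have hjne : ¬ ((⟨j' + 1, hjlt⟩ : Fin n) = 0) := by
        intro h
        have : j' + 1 = 0 := congrArg Fin.val h
        omega
      rw [if_neg hjne, add_zero]
      have hsum : (∑ m : Fin n, if (m : ℕ) + 1 < n ∧ ((⟨j' + 1, hjlt⟩ : Fin n) : ℕ) = (m : ℕ) + 1
          then W m a b else 0) = W ⟨j', hj'⟩ a b := by
        have key : ∀ m : Fin n, ((m : ℕ) + 1 < n ∧ ((⟨j' + 1, hjlt⟩ : Fin n) : ℕ) = (m : ℕ) + 1)
            ↔ m = ⟨j', hj'⟩ := by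
          intro m
          simp [Fin.ext_iff]
          omega
        rw [Finset.sum_congr rfl fun m _ => if_congr (key m) rfl rfl]
        simp [Finset.sum_ite_eq']
      rw [hsum]
      rcases lt_or_ge (j' + 1) p with hjp | hjp
      · rw [hW]
        simp only
        rw [Rm_step hDrows hDcols hν hjlt hjp]
        simp only [Matrix.sub_apply, Matrix.add_apply, Nat.succ_sub_succ,
          Nat.add_le_add_iff_right]
        ring
      · have hR1 : Rm X p ν j' = 0 := Rm_zero_of_ple _ _ _ (by omega)
        have hR2 : Rm X p (ν + 1) (j' + 1) = 0 := Rm_zero_of_ple _ _ _ (by omega)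
        have hB : blk X ⟨ν, hν⟩ ⟨j' + 1, hjlt⟩ = 0 := blk_PD_zero_right hDcols (by simpa)
        rw [hW]
        simp only
        rw [hR1, hR2, hB]
        simp [Matrix.sub_apply, Nat.succ_sub_succ]

include hDrows hDcols in
lemma wn_zero [NeZero n] (hpn : p ≤ n) (hA0 : A 0 = 1) (j : Fin n) (a b : Fin s) :
    wrow (frob n s A + D) (Gam A (toep n s A * D)) n a (j, b) = 0 := by
  obtain ⟨ν, hn⟩ : ∃ ν, n = ν + 1 := ⟨n - 1, by have := Fin.pos j; omega⟩
  subst hn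
  have hν : ν < ν + 1 := by omega
  have hn1 : (ν + 1) - 1 < ν + 1 := by omega
  have h0n : 0 < ν + 1 := by omega
  set X := toep (ν + 1) s A * D with hX
  set Mm := frob (ν + 1) s A + D with hM
  set G := Gam A X with hG
  set W : Fin (ν + 1) → Matrix (Fin s) (Fin s) K :=
    fun m => (if (m : ℕ) ≤ ν then A (ν - (m : ℕ)) else 0) - Rm X p ν (m : ℕ) with hW
  rw [wrow_succ, Matrix.add_apply, mulblk]
  have expand : ∀ (m : Fin (ν + 1)) (c : Fin s), wrow Mm G ν a (m, c) * Mm (m, c) (j, b)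
      = W m a c * frob (ν + 1) s A (m, c) (j, b) + W m a c * D (m, c) (j, b) := by
    intro m c
    rw [ML hDrows hDcols hpn hA0 ν hν m a c, hM, Matrix.add_apply, mul_add]
  rw [Finset.sum_congr rfl fun m _ => Finset.sum_congr rfl fun c _ => expand m c,
    Finset.sum_congr rfl fun (m : Fin (ν + 1)) _ => Finset.sum_add_distrib,
    Finset.sum_add_distrib,
    Fpart A W hn1 a b j, Dpart hDrows hDcols hν a b j W (fun m => rfl)]
  have hWn1 : W ⟨(ν + 1) - 1, hn1⟩ = 1 := by
    rw [hW]
    simp only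
    rw [Rm_zero_of_le hDrows hDcols (by omega), sub_zero, if_pos (by omega)]
    have : ν - ((⟨(ν + 1) - 1, hn1⟩ : Fin (ν + 1)) : ℕ) = 0 := by
      simp
    rw [this, hA0]
  rw [hWn1, Matrix.one_mul]
  have hsecond : (G (ν + 1) * urow Mm 0) a (j, b)
      = if j = (0 : Fin (ν + 1)) then G (ν + 1) a b else 0 := by
    rw [Matrix.mul_apply]
    by_cases hj : j = (0 : Fin (ν + 1))
    · subst hj
      rw [if_pos rfl]
      have : ∀ c : Fin s, urow Mm 0 c ((0 : Fin (ν + 1)), b) = if c = b then (1 : K) else 0 := by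
        intro c
        rw [urow_zero, Matrix.one_apply]
        simp [Prod.ext_iff, eq_comm]
      simp [this, mul_ite, mul_one, mul_zero, Finset.sum_ite_eq']
    · rw [if_neg hj]
      refine Finset.sum_eq_zero fun c _ => ?_
      rw [urow_zero, Matrix.one_apply, if_neg (by simp [Prod.ext_iff, Ne.symm, eq_comm]; tauto),
        mul_zero]
  rw [hsecond]
  obtain ⟨jv, hjlt⟩ := j
  rcases jv with _ | j'
  · -- j = 0
    have hsum0 : (∑ m : Fin (ν + 1), if (m : ℕ) + 1 < ν + 1
        ∧ ((⟨0, hjlt⟩ : Fin (ν + 1)) : ℕ) = (m : ℕ) + 1 then W m a b else 0) = 0 := by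
      refine Finset.sum_eq_zero fun m _ => if_neg ?_
      simp
    have hj0 : (⟨0, hjlt⟩ : Fin (ν + 1)) = 0 := rfl
    rw [hsum0, hj0, if_pos rfl]
    have hGam : G (ν + 1) = A (ν + 1) - Tm X ν := rfl
    have hTm : Tm X ν = blk X ⟨ν, hν⟩ ⟨0, h0n⟩ := by
      have := Tm_last X h0n hn1
      simpa using this
    rw [hGam, hTm]
    have hbb : blk X ⟨ν, hν⟩ (0 : Fin (ν + 1)) a b = blk X ⟨ν, hν⟩ ⟨0, h0n⟩ a b := rfl
    simp [Matrix.sub_apply, Matrix.add_apply, Matrix.neg_apply, hbb]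
    have hbb' : blk (toep (ν + 1) s A * D) ⟨ν, hν⟩ 0 a b = blk X ⟨ν, hν⟩ ⟨0, h0n⟩ a b := hbb
    rw [hbb']
    ring
  · -- j = j' + 1
    have hj' : j' < ν + 1 := by omega
    have hj'ν : j' ≤ ν := by omega
    have hjne : ¬ ((⟨j' + 1, hjlt⟩ : Fin (ν + 1)) = 0) := by
      intro h
      have : j' + 1 = 0 := congrArg Fin.val h
      omega
    rw [if_neg hjne, add_zero]
    have hsum : (∑ m : Fin (ν + 1), if (m : ℕ) + 1 < ν + 1
        ∧ ((⟨j' + 1, hjlt⟩ : Fin (ν + 1)) : ℕ) = (m : ℕ) + 1 then W m a b else 0)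
        = W ⟨j', hj'⟩ a b := by
      have key : ∀ m : Fin (ν + 1), ((m : ℕ) + 1 < ν + 1
          ∧ ((⟨j' + 1, hjlt⟩ : Fin (ν + 1)) : ℕ) = (m : ℕ) + 1) ↔ m = ⟨j', hj'⟩ := by
        intro m
        simp [Fin.ext_iff]
        omega
      rw [Finset.sum_congr rfl fun m _ => if_congr (key m) rfl rfl]
      simp [Finset.sum_ite_eq']
    rw [hsum]
    have hval : ((⟨j' + 1, hjlt⟩ : Fin (ν + 1)) : ℕ) = j' + 1 := rfl
    have hA : (ν + 1) - (j' + 1) = ν - j' := by omega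
    rcases lt_or_ge (j' + 1) p with hjp | hjp
    · have hstep := Rm_step (A := A) hDrows hDcols hν hjlt hjp
      have hRn : Rm X p (ν + 1) (j' + 1) = 0 := Rm_zero_of_n _ _
      rw [hRn, add_zero] at hstep
      rw [hW]
      simp only
      rw [hstep]
      simp only [Matrix.sub_apply, Matrix.neg_apply, Matrix.add_apply, hval, hA,
        if_pos hj'ν]
      ring
    · have hR1 : Rm X p ν j' = 0 := Rm_zero_of_ple _ _ _ (by omega)
      have hB : blk X ⟨ν, hν⟩ ⟨j' + 1, hjlt⟩ = 0 := blk_PD_zero_right hDcols (by simpa)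
      rw [hW]
      simp only
      rw [hR1, hB]
      simp only [Matrix.sub_apply, Matrix.neg_apply, Matrix.add_apply, Matrix.zero_apply,
        hval, hA, if_pos hj'ν]
      ring

include hDrows hDcols in
lemma urow_tri [NeZero n] :
    ∀ i, i < n →
      (∀ (j : Fin n) (a b : Fin s), (i : ℕ) < (j : ℕ) →
          urow (frob n s A + D) i a (j, b) = 0)
      ∧ (∀ (hi : i < n) (a b : Fin s),
          urow (frob n s A + D) i a (⟨i, hi⟩, b) = (1 : Matrix (Fin s) (Fin s) K) a b) := by
  intro i
  induction i with
  | zero =>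
    intro h0
    constructor
    · intro j a b hj
      rw [urow_zero, Matrix.one_apply, if_neg]
      intro h
      have := (Prod.ext_iff.mp h).1
      have : (0 : ℕ) = (j : ℕ) := by
        simpa [Fin.ext_iff] using this
      omega
    · intro hi a b
      rw [urow_zero, Matrix.one_apply, Matrix.one_apply]
      have h00 : ((0 : Fin n), a) = ((⟨0, hi⟩ : Fin n), b) ↔ a = b := by
        constructor
        · intro h; exact (Prod.ext_iff.mp h).2
        · intro h; rw [h]; rfl
      simp [h00]
  | succ i ih =>
    intro hi1
    have hi : i < n := by omega
    obtain ⟨ih1, ih2⟩ := ih hi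
    have hn1 : n - 1 < n := by omega
    set Mm := frob n s A + D with hM
    set W : Fin n → Matrix (Fin s) (Fin s) K := fun m => fun a c => urow Mm i a (m, c) with hWdef
    have hexp : ∀ (j : Fin n) (a b : Fin s), urow Mm (i + 1) a (j, b)
        = (∑ m : Fin n, if (m : ℕ) + 1 < n ∧ (j : ℕ) = (m : ℕ) + 1 then W m a b else 0)
          + (W ⟨n - 1, hn1⟩ * (-(A (n - (j : ℕ))))) a b
          + ∑ m : Fin n, ∑ c : Fin s, W m a c * D (m, c) (j, b) := by
      intro j a b
      rw [urow_succ, mulblk]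
      have expand : ∀ (m : Fin n) (c : Fin s), urow Mm i a (m, c) * Mm (m, c) (j, b)
          = W m a c * frob n s A (m, c) (j, b) + W m a c * D (m, c) (j, b) := by
        intro m c
        rw [hM, Matrix.add_apply, mul_add]
      rw [Finset.sum_congr rfl fun m _ => Finset.sum_congr rfl fun c _ => expand m c,
        Finset.sum_congr rfl fun (m : Fin n) _ => Finset.sum_add_distrib,
        Finset.sum_add_distrib, Fpart A W hn1 a b j]
    have hDterm : ∀ (j : Fin n) (a b : Fin s), (i : ℕ) + 1 ≤ (j : ℕ) →
        (∑ m : Fin n, ∑ c : Fin s, W m a c * D (m, c) (j, b)) = 0 := by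
      intro j a b hj
      refine Finset.sum_eq_zero fun m _ => Finset.sum_eq_zero fun c _ => ?_
      rcases lt_or_ge (i : ℕ) (m : ℕ) with hm | hm
      · rw [hWdef]
        simp only
        rw [ih1 m a c hm, zero_mul]
      · have hD : blk D m j = 0 := by
          rcases le_or_gt p (j : ℕ) with hpj | hpj
          · exact hDcols m j hpj
          · exact hDrows m j (by omega)
        have : D (m, c) (j, b) = 0 := congrFun (congrFun hD c) b
        rw [this, mul_zero]
    constructor
    · intro j a b hj
      rw [hexp j a b]
      have h1 : (∑ m : Fin n, if (m : ℕ) + 1 < n ∧ (j : ℕ) = (m : ℕ) + 1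
          then W m a b else 0) = 0 := by
        refine Finset.sum_eq_zero fun m _ => ?_
        split_ifs with h
        · exact ih1 m a b (by omega)
        · rfl
      have h2 : ∀ c : Fin s, W ⟨n - 1, hn1⟩ a c = 0 := by
        intro c
        refine ih1 ⟨n - 1, hn1⟩ a c ?_
        have := j.isLt
        simp
        omega
      have h3 : (W ⟨n - 1, hn1⟩ * (-(A (n - (j : ℕ))))) a b = 0 := by
        rw [Matrix.mul_apply]
        exact Finset.sum_eq_zero fun c _ => by rw [h2 c, zero_mul]
      rw [h1, h3, hDterm j a b (by omega), add_zero, add_zero]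
    · intro hi1' a b
      rw [hexp ⟨i + 1, hi1'⟩ a b]
      have h1 : (∑ m : Fin n, if (m : ℕ) + 1 < n
          ∧ ((⟨i + 1, hi1'⟩ : Fin n) : ℕ) = (m : ℕ) + 1 then W m a b else 0)
          = W ⟨i, hi⟩ a b := by
        have key : ∀ m : Fin n, ((m : ℕ) + 1 < n
            ∧ ((⟨i + 1, hi1'⟩ : Fin n) : ℕ) = (m : ℕ) + 1) ↔ m = ⟨i, hi⟩ := by
          intro m
          simp [Fin.ext_iff]
          omega
        rw [Finset.sum_congr rfl fun m _ => if_congr (key m) rfl rfl]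
        simp [Finset.sum_ite_eq']
      have h2 : ∀ c : Fin s, W ⟨n - 1, hn1⟩ a c = 0 := by
        intro c
        refine ih1 ⟨n - 1, hn1⟩ a c ?_
        simp
        omega
      have h3 : (W ⟨n - 1, hn1⟩ * (-(A (n - ((⟨i + 1, hi1'⟩ : Fin n) : ℕ))))) a b = 0 := by
        rw [Matrix.mul_apply]
        exact Finset.sum_eq_zero fun c _ => by rw [h2 c, zero_mul]
      rw [h1, h3, hDterm _ a b (by simp), add_zero, add_zero]
      exact ih2 hi a b

end PD

def Smat [NeZero n] (M : Matrix (Fin n × Fin s) (Fin n × Fin s) K) :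
    Matrix (Fin n × Fin s) (Fin n × Fin s) K := fun q c => urow M (q.1 : ℕ) q.2 c

section Spart
variable {A : ℕ → Matrix (Fin s) (Fin s) K} {D : Matrix (Fin n × Fin s) (Fin n × Fin s) K}
variable (hDrows : ∀ i j : Fin n, (i : ℕ) + 1 < p → blk D i j = 0)
    (hDcols : ∀ i j : Fin n, p ≤ (j : ℕ) → blk D i j = 0)

include hDrows hDcols in
lemma Smat_entry_zero [NeZero n] {q y : Fin n × Fin s} (h : (q.1 : ℕ) < (y.1 : ℕ)) :
    Smat (frob n s A + D) q y = 0 := by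
  obtain ⟨i, a⟩ := q
  obtain ⟨j, b⟩ := y
  exact ((urow_tri (A := A) hDrows hDcols i i.isLt).1) j a b h

include hDrows hDcols in
lemma Smat_entry_diag [NeZero n] (i : Fin n) (a b : Fin s) :
    Smat (frob n s A + D) (i, a) (i, b) = (1 : Matrix (Fin s) (Fin s) K) a b := by
  have := ((urow_tri (A := A) hDrows hDcols i i.isLt).2) i.isLt a b
  have hii : (⟨(i : ℕ), i.isLt⟩ : Fin n) = i := rfl
  rw [hii] at this
  exact this

include hDrows hDcols in
lemma Smat_det [NeZero n] : (Smat (frob n s A + D)).det = 1 := by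
  set e : Fin n × Fin s ≃ Fin (n * s) := finProdFinEquiv with he
  rw [← Matrix.det_submatrix_equiv_self e.symm (Smat (frob n s A + D))]
  have hval : ∀ x : Fin (n * s), (x : ℕ) = ((e.symm x).2 : ℕ) + s * ((e.symm x).1 : ℕ) := by
    intro x
    conv_lhs => rw [← e.apply_symm_apply x]
    rw [he]
    exact finProdFinEquiv_apply_val _
  have htri : ((Smat (frob n s A + D)).submatrix e.symm e.symm).BlockTriangular OrderDual.toDual := by
    intro x y hxy
    have hlt : (x : ℕ) < (y : ℕ) := hxy
    rw [hval x, hval y] at hlt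
    rw [Matrix.submatrix_apply]
    set i := (e.symm x).1
    set a := (e.symm x).2
    set j := (e.symm y).1
    set c := (e.symm y).2
    rcases lt_trichotomy (i : ℕ) (j : ℕ) with h | h | h
    · have : ((e.symm x).1 : ℕ) < ((e.symm y).1 : ℕ) := h
      exact Smat_entry_zero hDrows hDcols this
    · have hac : (a : ℕ) < (c : ℕ) := by rw [h] at hlt; omega
      have heq : (e.symm x) = (i, a) := rfl
      have heq' : (e.symm y) = (j, c) := rfl
      rw [heq, heq']
      have hij : i = j := Fin.ext h
      rw [hij]
      rw [Smat_entry_diag hDrows hDcols]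
      exact Matrix.one_apply_ne (fun hh => by rw [hh] at hac; omega)
    · exfalso
      have h1 : s * ((j : ℕ) + 1) ≤ s * (i : ℕ) := Nat.mul_le_mul_left s (by omega)
      have h2 : s * ((j : ℕ) + 1) = s * (j : ℕ) + s := by ring
      have h3 : (a : ℕ) < s := a.isLt
      have h4 : (c : ℕ) < s := c.isLt
      omega
  rw [Matrix.det_of_lowerTriangular _ htri]
  refine Finset.prod_eq_one fun x _ => ?_
  rw [Matrix.submatrix_apply]
  have heq : (e.symm x) = ((e.symm x).1, (e.symm x).2) := rfl
  rw [heq, Smat_entry_diag hDrows hDcols, Matrix.one_apply_eq]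

end Spart

lemma shiftJ_pow (m : ℕ) (i j : Fin n) :
    ((shiftJ K n) ^ m) i j = if (j : ℕ) = (i : ℕ) + m then 1 else 0 := by
  induction m generalizing i j with
  | zero =>
    rw [pow_zero, Matrix.one_apply]
    congr 1
    simp [Fin.ext_iff, eq_comm]
  | succ m ih =>
    rw [pow_succ, Matrix.mul_apply]
    have key : ∀ k : Fin n, ((shiftJ K n) ^ m) i k * shiftJ K n k j
        = if ((k : ℕ) = (i : ℕ) + m ∧ (j : ℕ) = (k : ℕ) + 1) then 1 else 0 := by
      intro k
      rw [ih i k, shiftJ]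
      split_ifs <;> simp_all
    rw [Finset.sum_congr rfl fun k _ => key k]
    by_cases hin : (i : ℕ) + m < n
    · have key2 : ∀ k : Fin n, (((k : ℕ) = (i : ℕ) + m ∧ (j : ℕ) = (k : ℕ) + 1))
          ↔ (k = ⟨(i : ℕ) + m, hin⟩ ∧ (j : ℕ) = (i : ℕ) + (m + 1)) := by
        intro k
        simp [Fin.ext_iff]
        omega
      rw [Finset.sum_congr rfl fun k _ => if_congr (key2 k) rfl rfl]
      by_cases hj : (j : ℕ) = (i : ℕ) + (m + 1)
      · simp [hj, Finset.sum_ite_eq']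
      · simp [hj]
    · rw [if_neg (by have := j.isLt; omega)]
      refine Finset.sum_eq_zero fun k _ => if_neg ?_
      have := k.isLt
      rintro ⟨h1, h2⟩
      omega

lemma kron_pow (m : ℕ) :
    ((shiftJ K n) ⊗ₖ (1 : Matrix (Fin s) (Fin s) K)) ^ m
      = ((shiftJ K n) ^ m) ⊗ₖ (1 : Matrix (Fin s) (Fin s) K) := by
  induction m with
  | zero => rw [pow_zero, pow_zero, Matrix.one_kronecker_one]
  | succ m ih => rw [pow_succ, pow_succ, ih, ← Matrix.mul_kronecker_mul, Matrix.one_mul]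

lemma SPlem (X : Matrix (Fin n × Fin s) (Fin n × Fin s) K) (m : ℕ) :
    SP ((((shiftJ K n) ⊗ₖ (1 : Matrix (Fin s) (Fin s) K)) ^ m) * X) = Tm X m := by
  rw [kron_pow, SP, Tm]
  refine Finset.sum_congr rfl fun i _ => ?_
  funext a b
  rw [blk, Matrix.mul_apply, Fintype.sum_prod_type, Matrix.sum_apply]
  refine Finset.sum_congr rfl fun r _ => ?_
  have key : ∀ c : Fin s, ((shiftJ K n ^ m) ⊗ₖ (1 : Matrix (Fin s) (Fin s) K)) (i, a) (r, c)
      = if (r : ℕ) = (i : ℕ) + m then (if a = c then (1 : K) else 0) else 0 := by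
    intro c
    rw [Matrix.kroneckerMap_apply, shiftJ_pow]
    split_ifs <;> simp_all [Matrix.one_apply]
  rw [Finset.sum_congr rfl fun c _ => congrArg (· * X (r, c) (i, b)) (key c)]
  by_cases hr : (r : ℕ) = (i : ℕ) + m
  · simp only [if_pos hr]
    simp [ite_mul, one_mul, zero_mul, Finset.sum_ite_eq, blk]
  · simp only [if_neg hr]
    simp

end S11

/-- If `F` is the lower block Frobenius matrix with last block row `[-Aₙ,…,-A₁]`,
`P` the lower block triangular Toeplitz matrix of the `Aᵢ` (`A₀ = I`), and `D` a block
matrix whose first `p-1` block rows and last `n-p` block columns are zero, then some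
invertible lower block triangular `S` satisfies `S (F + D) S⁻¹ = Φ`, the block
Frobenius matrix with coefficients `Γᵢ = Aᵢ - SP_s(𝒥^{i-1} P D)`. -/
theorem stmt11 {K : Type*} [Field K] {s n p : ℕ} (hp1 : 1 ≤ p) (hpn : p ≤ n)
    (A : ℕ → Matrix (Fin s) (Fin s) K) (hA0 : A 0 = 1)
    (D : Matrix (Fin n × Fin s) (Fin n × Fin s) K)
    (hDrows : ∀ i j : Fin n, (i : ℕ) + 1 < p → blk D i j = 0)
    (hDcols : ∀ i j : Fin n, p ≤ (j : ℕ) → blk D i j = 0) :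
    ∃ S : Matrix (Fin n × Fin s) (Fin n × Fin s) K,
      IsUnit S.det ∧
      (∀ i j : Fin n, (i : ℕ) < (j : ℕ) → blk S i j = 0) ∧
      (∀ i j : Fin n, (i : ℕ) + 1 < n →
        blk (S * (frob n s A + D) * S⁻¹) i j =
          if (j : ℕ) = (i : ℕ) + 1 then (1 : Matrix (Fin s) (Fin s) K) else 0) ∧
      (∀ (h : n - 1 < n) (j : Fin n),
        blk (S * (frob n s A + D) * S⁻¹) ⟨n - 1, h⟩ j =
          -(A (n - (j : ℕ)) -
            SP ((shiftJ K n ⊗ₖ (1 : Matrix (Fin s) (Fin s) K)) ^ (n - 1 - (j : ℕ)) *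
              (toep n s A * D)))) := by
  have hn0 : 0 < n := by omega
  haveI : NeZero n := ⟨by omega⟩
  set M := frob n s A + D with hM
  set X := toep n s A * D with hX
  set G := S11.Gam A X with hG
  set S := S11.Smat M with hS
  have hdet : IsUnit S.det := by
    rw [hS, hM, S11.Smat_det (A := A) hDrows hDcols]
    exact isUnit_one
  have hSS : S * S⁻¹ = 1 := Matrix.mul_nonsing_inv _ hdet
  have hPhi : ∀ (q y : Fin n × Fin s),
      (S * M * S⁻¹) q y = (S11.urow M ((q.1 : ℕ) + 1) * S⁻¹) q.2 y := by
    intro q y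
    have h1 : ∀ x, (S * M) q x = S11.urow M ((q.1 : ℕ) + 1) q.2 x := by
      intro x
      rw [Matrix.mul_apply, S11.urow_succ, Matrix.mul_apply]
      rfl
    rw [Matrix.mul_apply, Matrix.mul_apply]
    exact Finset.sum_congr rfl fun x _ => by rw [h1 x]
  have husinv : ∀ (k : ℕ) (hk : k < n) (a : Fin s) (y : Fin n × Fin s),
      (S11.urow M k * S⁻¹) a y
        = (1 : Matrix (Fin n × Fin s) (Fin n × Fin s) K) ((⟨k, hk⟩ : Fin n), a) y := by
    intro k hk a y
    rw [← hSS, Matrix.mul_apply, Matrix.mul_apply]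
    rfl
  refine ⟨S, hdet, ?_, ?_, ?_⟩
  · intro i j hij
    funext a b
    show S ((i, a)) ((j, b)) = (0 : Matrix (Fin s) (Fin s) K) a b
    rw [Matrix.zero_apply, hS, hM]
    exact S11.Smat_entry_zero (A := A) hDrows hDcols (q := (i, a)) (y := (j, b)) hij
  · intro i j hij
    funext a b
    show (S * M * S⁻¹) ((i, a)) ((j, b)) = _
    rw [hPhi (i, a) (j, b)]
    rw [husinv ((i : ℕ) + 1) (by omega) a (j, b), Matrix.one_apply]
    by_cases hj : (j : ℕ) = (i : ℕ) + 1
    · rw [if_pos hj]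
      have hcond : (((⟨(i : ℕ) + 1, by omega⟩ : Fin n), a) = (j, b)) ↔ a = b := by
        constructor
        · intro h; exact (Prod.ext_iff.mp h).2
        · intro h
          have : (⟨(i : ℕ) + 1, by omega⟩ : Fin n) = j := Fin.ext (by simp [hj])
          rw [this, h]
      rw [Matrix.one_apply]
      simp [hcond]
    · rw [if_neg hj, Matrix.zero_apply, if_neg]
      intro h
      have := (Prod.ext_iff.mp h).1
      exact hj (by simpa [Fin.ext_iff, eq_comm] using this)
  · intro h j
    funext a b
    show (S * M * S⁻¹) ((⟨n - 1, h⟩, a)) ((j, b)) = _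
    rw [hPhi (⟨n - 1, h⟩, a) (j, b)]
    have hidx : ((⟨n - 1, h⟩ : Fin n).1 : ℕ) + 1 = n := by simp; omega
    rw [hidx]
    have hw : S11.wrow M G n = 0 := by
      funext c q
      obtain ⟨j', b'⟩ := q
      rw [hG, hX, hM]
      rw [S11.wn_zero hDrows hDcols hpn hA0 j' c b']
      rfl
    have hun : S11.urow M n
        = ∑ k ∈ Finset.range n, (-(G (k + 1))) * S11.urow M (n - (k + 1)) := by
      rw [S11.wrow, Finset.sum_range_succ'] at hw
      have h0 : G 0 * S11.urow M (n - 0) = S11.urow M n := by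
        have : G 0 = 1 := rfl
        rw [Nat.sub_zero, this, Matrix.one_mul]
      rw [h0] at hw
      have h2 : S11.urow M n
          = -∑ k ∈ Finset.range n, G (k + 1) * S11.urow M (n - (k + 1)) :=
        eq_neg_of_add_eq_zero_right hw
      rw [h2, ← Finset.sum_neg_distrib]
      exact Finset.sum_congr rfl fun k _ => (Matrix.neg_mul _ _).symm
    rw [hun, Matrix.sum_mul, Matrix.sum_apply]
    have hterm : ∀ k ∈ Finset.range n,
        ((-(G (k + 1))) * S11.urow M (n - (k + 1)) * S⁻¹) a (j, b)
          = if k = n - 1 - (j : ℕ) then (-(G (k + 1))) a b else 0 := by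
      intro k hk
      have hkr : k < n := Finset.mem_range.mp hk
      have hkn : n - (k + 1) < n := by omega
      rw [Matrix.mul_assoc, Matrix.mul_apply]
      have hc : ∀ c : Fin s, (S11.urow M (n - (k + 1)) * S⁻¹) c (j, b)
          = if ((⟨n - (k + 1), hkn⟩ : Fin n) = j ∧ c = b) then (1 : K) else 0 := by
        intro c
        rw [husinv _ hkn c (j, b), Matrix.one_apply]
        congr 1
        simp [Prod.ext_iff]
      rw [Finset.sum_congr rfl fun c _ => by rw [hc c]]
      by_cases hj : (⟨n - (k + 1), hkn⟩ : Fin n) = j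
      · have hkval : k = n - 1 - (j : ℕ) := by
          have : n - (k + 1) = (j : ℕ) := by rw [← hj]
          have := j.isLt
          omega
        rw [if_pos hkval]
        simp [hj, mul_ite, mul_one, mul_zero, Finset.sum_ite_eq']
      · have hkval : ¬ (k = n - 1 - (j : ℕ)) := by
          intro hh
          refine hj (Fin.ext ?_)
          have := j.isLt
          simp
          omega
        rw [if_neg hkval]
        refine Finset.sum_eq_zero fun c _ => ?_
        rw [if_neg (by tauto), mul_zero]
    rw [Finset.sum_congr rfl hterm, Finset.sum_ite_eq']
    rw [if_pos (Finset.mem_range.mpr (by have := j.isLt; omega))]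
    have hnj : n - (j : ℕ) = (n - 1 - (j : ℕ)) + 1 := by have := j.isLt; omega
    rw [hnj]
    have hGred : G ((n - 1 - (j : ℕ)) + 1)
        = A ((n - 1 - (j : ℕ)) + 1) - S11.Tm X (n - 1 - (j : ℕ)) := rfl
    rw [hGred, S11.SPlem X (n - 1 - (j : ℕ))]
end

section
/- Define N_0 = I ∈ M_{ns} and N_ν = N_{ν−1}·F + (I_n ⊗ A_ν) for ν = 1,…,n−1, where F is the lower block Frobenius matrix with last block row [−A_n,…,−A_1]. Then for every block matrix D ∈ M_{ns} whose first p−1 block rows and last n−p block columns are zero, SP_s(𝒥^ν P D) = SP_s(N_ν D) for all ν = 0,…,n−1. -/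
open Matrix Kronecker

section Aux

variable {K : Type*} [Field K] {s n : ℕ}

lemma blk_mul (M N : Matrix (Fin n × Fin s) (Fin n × Fin s) K) (i j : Fin n) :
    blk (M * N) i j = ∑ k, blk M i k * blk N k j := by
  ext a b
  simp [blk, Matrix.mul_apply, Matrix.sum_apply, Fintype.sum_prod_type]

lemma blk_add (M N : Matrix (Fin n × Fin s) (Fin n × Fin s) K) (i j : Fin n) :
    blk (M + N) i j = blk M i j + blk N i j := by
  ext a b; simp [blk]

lemma blk_one (i j : Fin n) :
    blk (1 : Matrix (Fin n × Fin s) (Fin n × Fin s) K) i j = if i = j then 1 else 0 := by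
  ext a b
  by_cases h : i = j <;>
    simp [blk, Matrix.one_apply, Prod.ext_iff, h]

lemma blk_kron (X : Matrix (Fin n) (Fin n) K) (B : Matrix (Fin s) (Fin s) K) (i j : Fin n) :
    blk (X ⊗ₖ B) i j = X i j • B := by
  ext a b; simp [blk, Matrix.kroneckerMap_apply, smul_eq_mul]

lemma blk_toep (A : ℕ → Matrix (Fin s) (Fin s) K) (m k : Fin n) :
    blk (toep n s A) m k = if (k : ℕ) ≤ (m : ℕ) then A ((m : ℕ) - (k : ℕ)) else 0 := by
  ext a b
  by_cases h : (k : ℕ) ≤ (m : ℕ) <;> simp [blk, toep, h]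

lemma blk_frob (A : ℕ → Matrix (Fin s) (Fin s) K) (k j : Fin n) :
    blk (frob n s A) k j =
      if (k : ℕ) + 1 < n then (if (j : ℕ) = (k : ℕ) + 1 then 1 else 0)
      else -A (n - (j : ℕ)) := by
  ext a b
  simp only [blk, frob]
  split_ifs <;> rfl

lemma SP_mul (M D : Matrix (Fin n × Fin s) (Fin n × Fin s) K) :
    SP (M * D) = ∑ i, ∑ k, blk M i k * blk D k i := by
  unfold SP
  exact Finset.sum_congr rfl (fun i _ => blk_mul M D i i)

lemma shiftJ_pow (ν : ℕ) (i j : Fin n) :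
    ((shiftJ K n) ^ ν) i j = if (j : ℕ) = (i : ℕ) + ν then 1 else 0 := by
  induction ν generalizing j with
  | zero =>
    rw [pow_zero, Matrix.one_apply]
    by_cases h : i = j
    · subst h
      rw [if_pos rfl, if_pos (show (i : ℕ) = (i : ℕ) + 0 by omega)]
    · rw [if_neg h, if_neg (show ¬ (j : ℕ) = (i : ℕ) + 0 from
        fun hc => h (Fin.ext (by omega)))]
  | succ ν ih =>
    rw [pow_succ, Matrix.mul_apply, Finset.sum_congr rfl (fun m _ => by rw [ih m]),
      show (i : ℕ) + (ν + 1) = (i : ℕ) + ν + 1 by omega]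
    by_cases h : (i : ℕ) + ν < n
    · rw [Finset.sum_eq_single (⟨(i : ℕ) + ν, h⟩ : Fin n)]
      · rw [if_pos (show ((⟨(i : ℕ) + ν, h⟩ : Fin n) : ℕ) = (i : ℕ) + ν from rfl), one_mul]
        rfl
      · intro m _ hm
        rw [if_neg (show ¬ (m : ℕ) = (i : ℕ) + ν from fun hc => hm (Fin.ext hc)), zero_mul]
      · intro hmem; exact absurd (Finset.mem_univ _) hmem
    · rw [if_neg (show ¬ (j : ℕ) = (i : ℕ) + ν + 1 by have := j.isLt; omega)]
      apply Finset.sum_eq_zero; intro m _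
      rw [if_neg (show ¬ (m : ℕ) = (i : ℕ) + ν by have := m.isLt; omega), zero_mul]

lemma kron_pow (ν : ℕ) :
    (shiftJ K n ⊗ₖ (1 : Matrix (Fin s) (Fin s) K)) ^ ν = ((shiftJ K n) ^ ν) ⊗ₖ 1 := by
  induction ν with
  | zero => rw [pow_zero, pow_zero, Matrix.one_kronecker_one]
  | succ ν ih => rw [pow_succ, pow_succ, ih, ← Matrix.mul_kronecker_mul, mul_one]

/-- Explicit formula for the blocks of `Nmat`. -/
def fN (A : ℕ → Matrix (Fin s) (Fin s) K) (n ν i j : ℕ) : Matrix (Fin s) (Fin s) K :=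
  if i + ν < n then (if i ≤ j ∧ j ≤ i + ν then A (ν + i - j) else 0)
  else (if ν + i - n ≤ j ∧ j < i then -A (ν + i - j) else 0)

lemma fN_last (A : ℕ → Matrix (Fin s) (Fin s) K) (hA0 : A 0 = 1) {ν i : ℕ}
    (hi : i < n) :
    fN A n ν i (n - 1) = if i + ν = n - 1 then 1 else 0 := by
  unfold fN
  by_cases hc : i + ν = n - 1
  · rw [if_pos (show i + ν < n by omega),
      if_pos (show i ≤ n - 1 ∧ n - 1 ≤ i + ν by omega),
      show ν + i - (n - 1) = 0 by omega, hA0, if_pos hc]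
  · by_cases h2 : i + ν < n
    · rw [if_pos h2, if_neg (show ¬ (i ≤ n - 1 ∧ n - 1 ≤ i + ν) by omega), if_neg hc]
    · rw [if_neg h2, if_neg (show ¬ (ν + i - n ≤ n - 1 ∧ n - 1 < i) by omega), if_neg hc]

lemma fN_step (A : ℕ → Matrix (Fin s) (Fin s) K) (hA0 : A 0 = 1) {ν i j : ℕ}
    (hν : ν + 1 < n) (hi : i < n) (hj : j < n) :
    (if 1 ≤ j then fN A n ν i (j - 1) else 0) + fN A n ν i (n - 1) * (-A (n - j))
      + (if i = j then A (ν + 1) else 0) = fN A n (ν + 1) i j := by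
  rw [fN_last A hA0 hi]
  unfold fN
  rcases Nat.lt_trichotomy (i + ν + 1) n with hC | hC | hC
  · rw [if_neg (show ¬ i + ν = n - 1 by omega), zero_mul, add_zero,
      if_pos (show i + (ν + 1) < n by omega)]
    rcases Nat.lt_trichotomy i j with h | h | h
    · rw [if_pos (show 1 ≤ j by omega), if_pos (show i + ν < n by omega),
        if_neg (show ¬ i = j by omega), add_zero]
      by_cases h2 : j ≤ i + (ν + 1)
      · rw [if_pos (show i ≤ j - 1 ∧ j - 1 ≤ i + ν by omega),
          if_pos (show i ≤ j ∧ j ≤ i + (ν + 1) by omega),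
          show ν + i - (j - 1) = ν + 1 + i - j by omega]
      · rw [if_neg (show ¬ (i ≤ j - 1 ∧ j - 1 ≤ i + ν) by omega),
          if_neg (show ¬ (i ≤ j ∧ j ≤ i + (ν + 1)) by omega)]
    · rw [if_pos (show i ≤ j ∧ j ≤ i + (ν + 1) by omega),
        show ν + 1 + i - j = ν + 1 by omega, if_pos h]
      by_cases h0 : 1 ≤ j
      · rw [if_pos h0, if_pos (show i + ν < n by omega),
          if_neg (show ¬ (i ≤ j - 1 ∧ j - 1 ≤ i + ν) by omega), zero_add]
      · rw [if_neg h0, zero_add]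
    · rw [if_neg (show ¬ i = j by omega), add_zero,
        if_neg (show ¬ (i ≤ j ∧ j ≤ i + (ν + 1)) by omega)]
      by_cases h0 : 1 ≤ j
      · rw [if_pos h0, if_pos (show i + ν < n by omega),
          if_neg (show ¬ (i ≤ j - 1 ∧ j - 1 ≤ i + ν) by omega)]
      · rw [if_neg h0]
  · rw [if_pos (show i + ν = n - 1 by omega), one_mul,
      if_neg (show ¬ i + (ν + 1) < n by omega)]
    rcases Nat.lt_trichotomy i j with h | h | h
    · rw [if_pos (show 1 ≤ j by omega), if_pos (show i + ν < n by omega),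
        if_pos (show i ≤ j - 1 ∧ j - 1 ≤ i + ν by omega),
        if_neg (show ¬ i = j by omega), add_zero,
        if_neg (show ¬ (ν + 1 + i - n ≤ j ∧ j < i) by omega),
        show ν + i - (j - 1) = n - j by omega]
      abel
    · rw [if_pos (show 1 ≤ j by omega), if_pos (show i + ν < n by omega),
        if_neg (show ¬ (i ≤ j - 1 ∧ j - 1 ≤ i + ν) by omega), zero_add,
        if_pos h, if_neg (show ¬ (ν + 1 + i - n ≤ j ∧ j < i) by omega),
        show n - j = ν + 1 by omega]
      abel
    · rw [if_neg (show ¬ i = j by omega), add_zero,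
        if_pos (show ν + 1 + i - n ≤ j ∧ j < i by omega),
        show n - j = ν + 1 + i - j by omega]
      by_cases h0 : 1 ≤ j
      · rw [if_pos h0, if_pos (show i + ν < n by omega),
          if_neg (show ¬ (i ≤ j - 1 ∧ j - 1 ≤ i + ν) by omega), zero_add]
      · rw [if_neg h0, zero_add]
  · rw [if_neg (show ¬ i + ν = n - 1 by omega), zero_mul, add_zero,
      if_neg (show ¬ i + (ν + 1) < n by omega), if_neg (show ¬ i + ν < n by omega)]
    rcases Nat.lt_trichotomy i j with h | h | h
    · rw [if_pos (show 1 ≤ j by omega),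
        if_neg (show ¬ (ν + i - n ≤ j - 1 ∧ j - 1 < i) by omega), zero_add,
        if_neg (show ¬ i = j by omega),
        if_neg (show ¬ (ν + 1 + i - n ≤ j ∧ j < i) by omega)]
    · rw [if_pos (show 1 ≤ j by omega),
        if_pos (show ν + i - n ≤ j - 1 ∧ j - 1 < i by omega), if_pos h,
        if_neg (show ¬ (ν + 1 + i - n ≤ j ∧ j < i) by omega),
        show ν + i - (j - 1) = ν + 1 by omega]
      abel
    · rw [if_neg (show ¬ i = j by omega), add_zero]
      by_cases hcond : ν + 1 + i - n ≤ j
      · rw [if_pos (show 1 ≤ j by omega),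
          if_pos (show ν + i - n ≤ j - 1 ∧ j - 1 < i by omega),
          if_pos (show ν + 1 + i - n ≤ j ∧ j < i from ⟨hcond, h⟩),
          show ν + i - (j - 1) = ν + 1 + i - j by omega]
      · rw [if_neg (show ¬ (ν + 1 + i - n ≤ j ∧ j < i) by omega)]
        by_cases h0 : 1 ≤ j
        · rw [if_pos h0, if_neg (show ¬ (ν + i - n ≤ j - 1 ∧ j - 1 < i) by omega)]
        · rw [if_neg h0]

lemma key_sum (A : ℕ → Matrix (Fin s) (Fin s) K) {ν : ℕ} (hν : ν < n) (i j : Fin n) :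
    ∑ k : Fin n, fN A n ν (i : ℕ) (k : ℕ) * blk (frob n s A) k j
      = (if 1 ≤ (j : ℕ) then fN A n ν (i : ℕ) ((j : ℕ) - 1) else 0)
        + fN A n ν (i : ℕ) (n - 1) * (-A (n - (j : ℕ))) := by
  have hn : 0 < n := lt_of_le_of_lt (Nat.zero_le _) hν
  have hlast : n - 1 < n := by omega
  rw [← Finset.sum_erase_add _ _ (Finset.mem_univ (⟨n - 1, hlast⟩ : Fin n))]
  congr 1
  · by_cases hj : 1 ≤ (j : ℕ)
    · have hj1 : (j : ℕ) - 1 < n := by omega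
      have hjn : (j : ℕ) < n := j.isLt
      rw [if_pos hj, Finset.sum_eq_single_of_mem (⟨(j : ℕ) - 1, hj1⟩ : Fin n)]
      · rw [blk_frob,
          if_pos (show ((⟨(j : ℕ) - 1, hj1⟩ : Fin n) : ℕ) + 1 < n by
            simp only [Fin.val_mk]; omega),
          if_pos (show (j : ℕ) = ((⟨(j : ℕ) - 1, hj1⟩ : Fin n) : ℕ) + 1 by
            simp only [Fin.val_mk]; omega), mul_one]
      · refine Finset.mem_erase.2 ⟨?_, Finset.mem_univ _⟩
        simp only [ne_eq, Fin.mk.injEq]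
        omega
      · intro k hk hne
        have hkl : (k : ℕ) ≠ n - 1 := fun hc => (Finset.mem_erase.1 hk).1 (Fin.ext hc)
        have hk1 : (k : ℕ) + 1 < n := by have := k.isLt; omega
        rw [blk_frob, if_pos hk1,
          if_neg (show ¬ (j : ℕ) = (k : ℕ) + 1 from
            fun hc => hne (Fin.ext (show (k : ℕ) = (j : ℕ) - 1 by omega))), mul_zero]
    · rw [if_neg hj]
      apply Finset.sum_eq_zero
      intro k hk
      have hkl : (k : ℕ) ≠ n - 1 := fun hc => (Finset.mem_erase.1 hk).1 (Fin.ext hc)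
      have hk1 : (k : ℕ) + 1 < n := by have := k.isLt; omega
      rw [blk_frob, if_pos hk1, if_neg (show ¬ (j : ℕ) = (k : ℕ) + 1 by omega), mul_zero]
  · rw [blk_frob,
      if_neg (show ¬ ((⟨n - 1, hlast⟩ : Fin n) : ℕ) + 1 < n by
        simp only [Fin.val_mk]; omega)]

lemma Nmat_blk (A : ℕ → Matrix (Fin s) (Fin s) K) (hA0 : A 0 = 1) :
    ∀ ν, ν < n → ∀ i j : Fin n,
      blk (Nmat (frob n s A) A ν) i j = fN A n ν (i : ℕ) (j : ℕ) := by
  intro ν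
  induction ν with
  | zero =>
    intro hν i j
    rw [show Nmat (frob n s A) A 0 = 1 from rfl, blk_one]
    unfold fN
    rw [if_pos (show (i : ℕ) + 0 < n by have := i.isLt; omega)]
    by_cases h : i = j
    · subst h
      rw [if_pos rfl, if_pos (show (i : ℕ) ≤ (i : ℕ) ∧ (i : ℕ) ≤ (i : ℕ) + 0 by omega),
        show 0 + (i : ℕ) - (i : ℕ) = 0 by omega, hA0]
    · rw [if_neg h, if_neg (show ¬ ((i : ℕ) ≤ (j : ℕ) ∧ (j : ℕ) ≤ (i : ℕ) + 0) from
        fun hc => h (Fin.ext (by omega)))]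
  | succ ν ih =>
    intro hν i j
    have hν' : ν < n := by omega
    rw [show Nmat (frob n s A) A (ν + 1)
        = Nmat (frob n s A) A ν * frob n s A + (1 : Matrix (Fin n) (Fin n) K) ⊗ₖ A (ν + 1)
        from rfl, blk_add, blk_mul, blk_kron,
      Finset.sum_congr rfl (fun k _ => by rw [ih hν' i k]), key_sum A hν' i j]
    have hone : (1 : Matrix (Fin n) (Fin n) K) i j • A (ν + 1)
        = if (i : ℕ) = (j : ℕ) then A (ν + 1) else 0 := by
      rw [Matrix.one_apply]
      by_cases h : i = j
      · rw [if_pos h, one_smul, if_pos (show (i : ℕ) = (j : ℕ) by rw [h])]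
      · rw [if_neg h, zero_smul,
          if_neg (show ¬ (i : ℕ) = (j : ℕ) from fun hc => h (Fin.ext hc))]
    rw [hone]
    exact fN_step A hA0 hν i.isLt j.isLt

lemma lhs_blk (A : ℕ → Matrix (Fin s) (Fin s) K) (ν : ℕ) (i k : Fin n) :
    blk ((((shiftJ K n) ^ ν) ⊗ₖ (1 : Matrix (Fin s) (Fin s) K)) * toep n s A) i k
      = if (i : ℕ) + ν < n ∧ (k : ℕ) ≤ (i : ℕ) + ν then A ((i : ℕ) + ν - (k : ℕ))
        else 0 := by
  rw [blk_mul]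
  have hb : ∀ m : Fin n, blk (((shiftJ K n) ^ ν) ⊗ₖ (1 : Matrix (Fin s) (Fin s) K)) i m
      = if (m : ℕ) = (i : ℕ) + ν then 1 else 0 := by
    intro m
    rw [blk_kron, shiftJ_pow]
    split_ifs <;> simp
  rw [Finset.sum_congr rfl (fun m _ => by rw [hb m])]
  by_cases h : (i : ℕ) + ν < n
  · rw [Finset.sum_eq_single (⟨(i : ℕ) + ν, h⟩ : Fin n)]
    · rw [if_pos (show ((⟨(i : ℕ) + ν, h⟩ : Fin n) : ℕ) = (i : ℕ) + ν from rfl), one_mul,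
        blk_toep]
      by_cases h3 : (k : ℕ) ≤ (i : ℕ) + ν
      · rw [if_pos (show (k : ℕ) ≤ ((⟨(i : ℕ) + ν, h⟩ : Fin n) : ℕ) from h3),
          if_pos (show (i : ℕ) + ν < n ∧ (k : ℕ) ≤ (i : ℕ) + ν from ⟨h, h3⟩)]
      · rw [if_neg (show ¬ (k : ℕ) ≤ ((⟨(i : ℕ) + ν, h⟩ : Fin n) : ℕ) from h3),
          if_neg (show ¬ ((i : ℕ) + ν < n ∧ (k : ℕ) ≤ (i : ℕ) + ν) by omega)]
    · intro m _ hm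
      rw [if_neg (show ¬ (m : ℕ) = (i : ℕ) + ν from fun hc => hm (Fin.ext hc)), zero_mul]
    · intro hmem; exact absurd (Finset.mem_univ _) hmem
  · rw [if_neg (show ¬ ((i : ℕ) + ν < n ∧ (k : ℕ) ≤ (i : ℕ) + ν) by omega)]
    apply Finset.sum_eq_zero
    intro m _
    rw [if_neg (show ¬ (m : ℕ) = (i : ℕ) + ν by have := m.isLt; omega), zero_mul]

end Aux

/-- For every block matrix `D` whose first `p-1` block rows and last `n-p` block
columns are zero, `SP_s(𝒥^ν P D) = SP_s(N_ν D)` for all `ν = 0,…,n-1`. -/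
theorem stmt12 {K : Type*} [Field K] {s n p : ℕ} (hp1 : 1 ≤ p) (hpn : p ≤ n)
    (A : ℕ → Matrix (Fin s) (Fin s) K) (hA0 : A 0 = 1)
    (D : Matrix (Fin n × Fin s) (Fin n × Fin s) K)
    (hDrows : ∀ i j : Fin n, (i : ℕ) + 1 < p → blk D i j = 0)
    (hDcols : ∀ i j : Fin n, p ≤ (j : ℕ) → blk D i j = 0)
    (ν : ℕ) (hν : ν < n) :
    SP ((shiftJ K n ⊗ₖ (1 : Matrix (Fin s) (Fin s) K)) ^ ν * (toep n s A * D)) =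
      SP (Nmat (frob n s A) A ν * D) := by
  have hD : ∀ i k : Fin n, (k : ℕ) < (i : ℕ) → blk D k i = 0 := by
    intro i k hk
    by_cases hpi : p ≤ (i : ℕ)
    · exact hDcols k i hpi
    · exact hDrows k i (by omega)
  rw [kron_pow, ← mul_assoc, SP_mul, SP_mul]
  refine Finset.sum_congr rfl (fun i _ => Finset.sum_congr rfl (fun k _ => ?_))
  by_cases h : (i : ℕ) ≤ (k : ℕ)
  · congr 1
    rw [lhs_blk, Nmat_blk A hA0 ν hν]
    unfold fN
    by_cases h2 : (i : ℕ) + ν < n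
    · rw [if_pos h2]
      by_cases h3 : (k : ℕ) ≤ (i : ℕ) + ν
      · rw [if_pos (show (i : ℕ) + ν < n ∧ (k : ℕ) ≤ (i : ℕ) + ν from ⟨h2, h3⟩),
          if_pos (show (i : ℕ) ≤ (k : ℕ) ∧ (k : ℕ) ≤ (i : ℕ) + ν from ⟨h, h3⟩),
          show (i : ℕ) + ν - (k : ℕ) = ν + (i : ℕ) - (k : ℕ) by omega]
      · rw [if_neg (show ¬ ((i : ℕ) + ν < n ∧ (k : ℕ) ≤ (i : ℕ) + ν) by omega),
          if_neg (show ¬ ((i : ℕ) ≤ (k : ℕ) ∧ (k : ℕ) ≤ (i : ℕ) + ν) by omega)]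
    · rw [if_neg h2, if_neg (show ¬ ((i : ℕ) + ν < n ∧ (k : ℕ) ≤ (i : ℕ) + ν) by omega),
        if_neg (show ¬ (ν + (i : ℕ) - n ≤ (k : ℕ) ∧ (k : ℕ) < (i : ℕ)) by omega)]
  · rw [hD i k (by omega), mul_zero, mul_zero]
end

section
/- Let Γ_i = A_i − SP_s(N_{i−1} D) for i = 1,…,n, where N_ν is defined by N_0 = I, N_ν = N_{ν−1}F + (I_n ⊗ A_ν), and let T_i = SP_s(F^{i−1} D). Then the column stack ĉol(Γ_1,…,Γ_n) equals ĉol(A_1,…,A_n) − P·ĉol(T_1,…,T_n), where P is the lower block triangular Toeplitz matrix with blocks A_{i−j} (A_0 = I). In particular, since P is invertible, ĉol(T_1,…,T_n) = P⁻¹(ĉol(A_1,…,A_n) − ĉol(Γ_1,…,Γ_n)). -/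
open Matrix Kronecker

/-- Stack `n` matrices of size `s×s` vertically into an `ns×s` matrix. -/
def colStack {K : Type*} [Field K] {n s : ℕ}
    (f : Fin n → Matrix (Fin s) (Fin s) K) : Matrix (Fin n × Fin s) (Fin s) K :=
  fun p b => f p.1 p.2 b

/-! ### Auxiliary lemmas -/

lemma SP_kron_mul {K : Type*} [Field K] {n s : ℕ} (B : Matrix (Fin s) (Fin s) K)
    (C : Matrix (Fin n × Fin s) (Fin n × Fin s) K) :
    SP (((1 : Matrix (Fin n) (Fin n) K) ⊗ₖ B) * C) = B * SP C := by
  ext a b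
  rw [Matrix.mul_apply]
  simp only [SP, Matrix.sum_apply, blk, Finset.mul_sum]
  rw [Finset.sum_comm]
  refine Finset.sum_congr rfl fun k _ => ?_
  rw [Matrix.mul_apply, Fintype.sum_prod_type, Finset.sum_comm]
  refine Finset.sum_congr rfl fun c _ => ?_
  simp [kroneckerMap_apply, Matrix.one_apply, ite_mul]

lemma Nmat_eq {K : Type*} [Field K] {n s : ℕ} (F : Matrix (Fin n × Fin s) (Fin n × Fin s) K)
    (A : ℕ → Matrix (Fin s) (Fin s) K) (hA0 : A 0 = 1) (ν : ℕ) :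
    Nmat F A ν = ∑ j ∈ Finset.range (ν+1),
      ((1 : Matrix (Fin n) (Fin n) K) ⊗ₖ A (ν - j)) * F ^ j := by
  induction ν with
  | zero => simp [Nmat, hA0]
  | succ ν ih =>
    rw [Nmat, ih, Finset.sum_mul, Finset.sum_range_succ' (fun j =>
      ((1 : Matrix (Fin n) (Fin n) K) ⊗ₖ A (ν + 1 - j)) * F ^ j)]
    simp only [Nat.succ_sub_succ_eq_sub, Nat.sub_zero, pow_zero, mul_one, pow_succ, mul_assoc]

lemma SP_sum {K : Type*} [Field K] {n s : ℕ} {ι : Type*} (t : Finset ι)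
    (M : ι → Matrix (Fin n × Fin s) (Fin n × Fin s) K) :
    SP (∑ j ∈ t, M j) = ∑ j ∈ t, SP (M j) := by
  ext a b
  simp only [SP, blk, Matrix.sum_apply]
  exact Finset.sum_comm

lemma SP_Nmat {K : Type*} [Field K] {n s : ℕ} (F : Matrix (Fin n × Fin s) (Fin n × Fin s) K)
    (A : ℕ → Matrix (Fin s) (Fin s) K) (hA0 : A 0 = 1)
    (D : Matrix (Fin n × Fin s) (Fin n × Fin s) K) (ν : ℕ) :
    SP (Nmat F A ν * D) = ∑ j ∈ Finset.range (ν+1), A (ν - j) * SP (F ^ j * D) := by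
  rw [Nmat_eq F A hA0 ν, Finset.sum_mul, SP_sum]
  simp_rw [mul_assoc, SP_kron_mul]

lemma sum_fin_ite {M : Type*} [AddCommMonoid M] {n : ℕ} (i : Fin n) (f : ℕ → M) :
    ∑ j : Fin n, (if (j:ℕ) ≤ (i:ℕ) then f (j:ℕ) else 0)
      = ∑ j ∈ Finset.range ((i:ℕ)+1), f j := by
  rw [Fin.sum_univ_eq_sum_range (fun j => if j ≤ (i:ℕ) then f j else 0)]
  rw [← Finset.sum_filter]
  congr 1
  ext j
  simp only [Finset.mem_filter, Finset.mem_range, Nat.lt_succ_iff]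
  have := i.isLt
  omega

lemma toep_det {K : Type*} [Field K] {n s : ℕ} (A : ℕ → Matrix (Fin s) (Fin s) K)
    (hA0 : A 0 = 1) : (toep n s A).det = 1 := by
  rw [← Matrix.det_transpose]
  have hbt : Matrix.BlockTriangular (toep n s A)ᵀ (fun p => p.1) := by
    intro p c h
    simp only [Matrix.transpose_apply, toep]
    rw [if_neg]
    exact fun hle => absurd (Fin.le_def.mpr hle) (not_le.mpr h)
  rw [hbt.det]
  refine Finset.prod_eq_one fun a _ => ?_
  have : (toep n s A)ᵀ.toSquareBlock (fun p => p.1) a = 1 := by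
    ext p c
    obtain ⟨⟨p1, p2⟩, hp⟩ := p
    obtain ⟨⟨c1, c2⟩, hc⟩ := c
    simp only at hp hc
    subst hp hc
    simp [Matrix.toSquareBlock_def, toep, hA0, Matrix.one_apply, Subtype.ext_iff, Prod.ext_iff,
      eq_comm]
  rw [this, Matrix.det_one]

/-- With `Γᵢ = Aᵢ - SP_s(N_{i-1} D)` and `Tᵢ = SP_s(F^{i-1} D)`, one has
`ĉol Γ = ĉol A - P · ĉol T`; in particular, since `P` is invertible,
`ĉol T = P⁻¹ (ĉol A - ĉol Γ)`. -/
theorem stmt15 {K : Type*} [Field K] {s n : ℕ}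
    (A : ℕ → Matrix (Fin s) (Fin s) K) (hA0 : A 0 = 1)
    (D : Matrix (Fin n × Fin s) (Fin n × Fin s) K)
    (Γ T : Fin n → Matrix (Fin s) (Fin s) K)
    (hΓ : ∀ i : Fin n, Γ i = A ((i : ℕ) + 1) - SP (Nmat (frob n s A) A (i : ℕ) * D))
    (hT : ∀ i : Fin n, T i = SP ((frob n s A) ^ (i : ℕ) * D)) :
    IsUnit (toep n s A).det ∧
    colStack Γ = colStack (fun i => A ((i : ℕ) + 1)) - toep n s A * colStack T ∧
    colStack T = (toep n s A)⁻¹ * (colStack (fun i => A ((i : ℕ) + 1)) - colStack Γ) := by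
  have hdet : IsUnit (toep n s A).det := by rw [toep_det A hA0]; exact isUnit_one
  have key : toep n s A * colStack T
      = colStack (fun i => SP (Nmat (frob n s A) A (i : ℕ) * D)) := by
    ext p b
    obtain ⟨i, a⟩ := p
    show (toep n s A * colStack T) (i, a) b = SP (Nmat (frob n s A) A (i : ℕ) * D) a b
    rw [SP_Nmat (frob n s A) A hA0 D (i : ℕ), Matrix.sum_apply,
      ← sum_fin_ite i (fun k => (A ((i : ℕ) - k) * SP ((frob n s A) ^ k * D)) a b),
      Matrix.mul_apply, Fintype.sum_prod_type]
    refine Finset.sum_congr rfl fun j _ => ?_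
    by_cases h : (j : ℕ) ≤ (i : ℕ)
    · simp [toep, colStack, hT, h, Matrix.mul_apply]
    · simp [toep, colStack, h]
  have h2 : colStack Γ = colStack (fun i => A ((i : ℕ) + 1)) - toep n s A * colStack T := by
    rw [key]
    ext p b
    simp [colStack, hΓ]
  refine ⟨hdet, h2, ?_⟩
  have h4 : colStack (fun i => A ((i : ℕ) + 1)) - colStack Γ = toep n s A * colStack T := by
    rw [h2, sub_sub_cancel]
  rw [h4, ← Matrix.mul_assoc, Matrix.nonsing_inv_mul _ hdet, Matrix.one_mul]
end
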